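/- For the Gaussian density φ with mean μ and covariance Σ = Q Δ Qᵗ (Δ = diag(a₁,…,a_d, b,…,b), Q orthogonal), −2 log φ(x) = ‖μ − P(x)‖²_A + (1/b)‖x − P(x)‖² + Σ_{j=1}^{d} log a_j + (p−d) log b + p log(2π), where P(x) = Q̃ Q̃ᵗ (x − μ) + μ is the affine projection onto the span of the first d eigenvectors translated to μ, and ‖y‖²_A = yᵗ Q̃ Δ⁻¹ Q̃ᵗ y. -/

import Mathlib

open Matrix

/-- `Q` with its last `p - d` columns replaced by zero columns. -/
def zeroLastCols {p : ℕ} (d : ℕ) (Q : Matrix (Fin p) (Fin p) ℝ) :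
    Matrix (Fin p) (Fin p) ℝ :=
  Matrix.of fun i j => if (j : ℕ) < d then Q i j else 0

/-- Density of the multivariate Gaussian `N_p(μ, S)`. -/
noncomputable def gaussPdf {p : ℕ} (μ : Fin p → ℝ) (S : Matrix (Fin p) (Fin p) ℝ)
    (x : Fin p → ℝ) : ℝ :=
  (2 * Real.pi) ^ (-(p : ℝ) / 2) * S.det ^ (-(1 : ℝ) / 2) *
    Real.exp (-((x - μ) ⬝ᵥ (S⁻¹ *ᵥ (x - μ))) / 2)

private lemma quad_helper {p : ℕ} (A B : Matrix (Fin p) (Fin p) ℝ) (y : Fin p → ℝ) :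
    (A *ᵥ y) ⬝ᵥ (B *ᵥ (A *ᵥ y)) = y ⬝ᵥ ((Aᵀ * B * A) *ᵥ y) := by
  have hA : A *ᵥ y = y ᵥ* Aᵀ := by rw [← mulVec_transpose, transpose_transpose]
  rw [mulVec_mulVec, hA, dotProduct_mulVec, dotProduct_mulVec, vecMul_vecMul, mul_assoc]

private lemma quad_helper2 {p : ℕ} (A : Matrix (Fin p) (Fin p) ℝ) (y : Fin p → ℝ) :
    (A *ᵥ y) ⬝ᵥ (A *ᵥ y) = y ⬝ᵥ ((Aᵀ * A) *ᵥ y) := by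
  have hA : A *ᵥ y = y ᵥ* Aᵀ := by rw [← mulVec_transpose, transpose_transpose]
  rw [dotProduct_mulVec, dotProduct_mulVec, ← vecMul_vecMul, ← hA]

theorem stmt_11 {p d : ℕ} (hp : 2 ≤ p) (hd : 1 ≤ d) (hdp : d ≤ p - 1)
    (Q : Matrix (Fin p) (Fin p) ℝ) (hQ : Q ∈ Matrix.orthogonalGroup (Fin p) ℝ)
    (a : Fin d → ℝ) (b : ℝ) (ha : ∀ j, 0 < a j) (hb : 0 < b)
    (Δ : Matrix (Fin p) (Fin p) ℝ)
    (hΔ : Δ = Matrix.diagonal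
      (fun j : Fin p => if h : (j : ℕ) < d then a ⟨j, h⟩ else b))
    (x μ P : Fin p → ℝ)
    (hP : P = (zeroLastCols d Q * (zeroLastCols d Q)ᵀ) *ᵥ (x - μ) + μ) :
    -2 * Real.log (gaussPdf μ (Q * Δ * Qᵀ) x) =
      (μ - P) ⬝ᵥ ((zeroLastCols d Q * Δ⁻¹ * (zeroLastCols d Q)ᵀ) *ᵥ (μ - P)) +
        (1 / b) * ((x - P) ⬝ᵥ (x - P)) +
        (∑ j : Fin d, Real.log (a j)) + (p - d : ℕ) * Real.log b +
        p * Real.log (2 * Real.pi) := by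
  have hdple : d ≤ p := le_trans hdp (Nat.sub_le p 1)
  -- orthogonality facts
  obtain ⟨h1, h2⟩ := hQ
  have hQQ : Q * Qᵀ = 1 := by simpa [Matrix.star_eq_conjTranspose] using h2
  have hQtQ : Qᵀ * Q = 1 := by simpa [Matrix.star_eq_conjTranspose] using h1
  have hcollapse : ∀ A B : Matrix (Fin p) (Fin p) ℝ,
      (Q * A * Qᵀ) * (Q * B * Qᵀ) = Q * (A * B) * Qᵀ := by
    intro A B
    simp only [Matrix.mul_assoc]
    rw [show Qᵀ * (Q * (B * Qᵀ)) = B * Qᵀ by rw [← Matrix.mul_assoc, hQtQ, one_mul]]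
  -- diagonal data
  set δ : Fin p → ℝ := fun j => if h : (j : ℕ) < d then a ⟨j, h⟩ else b with hδdef
  set g : Fin p → ℝ := fun j => if h : (j : ℕ) < d then (a ⟨j, h⟩)⁻¹ else b⁻¹ with hgdef
  set g1 : Fin p → ℝ := fun j => if h : (j : ℕ) < d then (a ⟨j, h⟩)⁻¹ else 0 with hg1def
  set e : Fin p → ℝ := fun j => if (j : ℕ) < d then 1 else 0 with hedef
  have hδpos : ∀ j, 0 < δ j := fun j => by
    by_cases h : (j : ℕ) < d <;> simp [hδdef, h, ha, hb]
  have hδ0 : ∀ j, δ j ≠ 0 := fun j => (hδpos j).ne'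
  have hδg : (fun j => δ j * g j) = fun _ => (1 : ℝ) := by
    funext j
    by_cases h : (j : ℕ) < d
    · simp only [hδdef, hgdef]
      rw [dif_pos h, dif_pos h]
      exact mul_inv_cancel₀ (ha _).ne'
    · simp only [hδdef, hgdef]
      rw [dif_neg h, dif_neg h]
      exact mul_inv_cancel₀ hb.ne'
  have hΔdiaginv : Matrix.diagonal δ * Matrix.diagonal g = 1 := by
    rw [diagonal_mul_diagonal, hδg, Matrix.diagonal_one]
  have hΔinv : Δ⁻¹ = Matrix.diagonal g := by
    rw [hΔ]; exact inv_eq_right_inv hΔdiaginv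
  have hΔΔinv : Δ * Δ⁻¹ = 1 := by rw [hΔinv, hΔ]; exact hΔdiaginv
  -- inverse of the covariance
  have hSinv : (Q * Δ * Qᵀ)⁻¹ = Q * Δ⁻¹ * Qᵀ := by
    apply inv_eq_right_inv
    rw [hcollapse]
    rw [hΔΔinv, Matrix.mul_one, hQQ]
  -- determinant
  have hdet : (Q * Δ * Qᵀ).det = Δ.det := by
    have hdq : Q.det * Qᵀ.det = 1 := by rw [← det_mul, hQQ, det_one]
    rw [det_mul, det_mul]
    linear_combination Δ.det * hdq
  have hdetpos : 0 < Δ.det := by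
    rw [hΔ, det_diagonal]
    exact Finset.prod_pos fun j _ => hδpos j
  -- zeroLastCols structure
  have hQE : zeroLastCols d Q = Q * Matrix.diagonal e := by
    ext i j
    rw [Matrix.mul_diagonal]
    by_cases h : (j : ℕ) < d <;> simp [zeroLastCols, hedef, h]
  have hEE : Matrix.diagonal e * Matrix.diagonal e = Matrix.diagonal e := by
    rw [diagonal_mul_diagonal]
    exact congrArg _ (funext fun j => by by_cases h : (j : ℕ) < d <;> simp [hedef, h])
  have hEg : Matrix.diagonal e * Matrix.diagonal g = Matrix.diagonal g1 := by
    rw [diagonal_mul_diagonal]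
    exact congrArg _ (funext fun j => by
      by_cases h : (j : ℕ) < d <;> simp [hedef, hgdef, hg1def, h])
  have hEg1 : Matrix.diagonal e * Matrix.diagonal g1 = Matrix.diagonal g1 := by
    rw [diagonal_mul_diagonal]
    exact congrArg _ (funext fun j => by
      by_cases h : (j : ℕ) < d <;> simp [hedef, hg1def, h])
  have hg1E : Matrix.diagonal g1 * Matrix.diagonal e = Matrix.diagonal g1 := by
    rw [diagonal_mul_diagonal]
    exact congrArg _ (funext fun j => by
      by_cases h : (j : ℕ) < d <;> simp [hedef, hg1def, h])
  have hproj : zeroLastCols d Q * (zeroLastCols d Q)ᵀ = Q * Matrix.diagonal e * Qᵀ := by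
    rw [hQE, transpose_mul, diagonal_transpose, Matrix.mul_assoc,
      ← Matrix.mul_assoc (Matrix.diagonal e), hEE, ← Matrix.mul_assoc]
  have hN : zeroLastCols d Q * Δ⁻¹ * (zeroLastCols d Q)ᵀ = Q * Matrix.diagonal g1 * Qᵀ := by
    rw [hQE, hΔinv, transpose_mul, diagonal_transpose, Matrix.mul_assoc Q, hEg,
      Matrix.mul_assoc Q, ← Matrix.mul_assoc (Matrix.diagonal g1), hg1E, ← Matrix.mul_assoc]
  set M : Matrix (Fin p) (Fin p) ℝ := Q * Matrix.diagonal e * Qᵀ with hMdef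
  have hMsym : Mᵀ = M := by
    rw [hMdef, transpose_mul, transpose_mul, diagonal_transpose, transpose_transpose,
      Matrix.mul_assoc]
  have hMM : M * M = M := by
    rw [hMdef, hcollapse, hEE]
  -- key diagonal splitting
  have hkey : Matrix.diagonal g = Matrix.diagonal g1 + b⁻¹ • (1 - Matrix.diagonal e) := by
    ext i j
    rcases eq_or_ne i j with rfl | hij
    · by_cases h : (i : ℕ) < d <;>
        simp [hgdef, hg1def, hedef, h, Matrix.add_apply, Matrix.smul_apply, Matrix.sub_apply,
          Matrix.one_apply_eq]
    · simp [Matrix.diagonal_apply_ne _ hij, Matrix.one_apply_ne hij, Matrix.add_apply,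
        Matrix.smul_apply, Matrix.sub_apply]
  have hone : (1 : Matrix (Fin p) (Fin p) ℝ) - M = Q * (1 - Matrix.diagonal e) * Qᵀ := by
    rw [Matrix.mul_sub, Matrix.sub_mul, Matrix.mul_one, hQQ, hMdef]
  have hSplit : Q * Δ⁻¹ * Qᵀ = Q * Matrix.diagonal g1 * Qᵀ + b⁻¹ • (1 - M) := by
    rw [hΔinv, hkey, Matrix.mul_add, Matrix.add_mul, hone, Matrix.mul_smul, Matrix.smul_mul]
  -- vectors
  set y : Fin p → ℝ := x - μ with hydef
  have hμP : μ - P = -(M *ᵥ y) := by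
    rw [hP, hproj]
    abel
  have hxP : x - P = (1 - M) *ᵥ y := by
    rw [hP, hproj, Matrix.sub_mulVec, Matrix.one_mulVec, hydef]
    abel
  -- term 1
  have hT1 : (μ - P) ⬝ᵥ ((zeroLastCols d Q * Δ⁻¹ * (zeroLastCols d Q)ᵀ) *ᵥ (μ - P)) =
      y ⬝ᵥ ((Q * Matrix.diagonal g1 * Qᵀ) *ᵥ y) := by
    rw [hμP, hN, mulVec_neg, dotProduct_neg, neg_dotProduct, neg_neg, quad_helper]
    congr 2
    rw [hMsym, hMdef, hcollapse, hEg1, hcollapse, hg1E]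
  -- term 2
  have hT2 : (x - P) ⬝ᵥ (x - P) = y ⬝ᵥ ((1 - M) *ᵥ y) := by
    rw [hxP, quad_helper2]
    congr 2
    rw [transpose_sub, transpose_one, hMsym]
    have : (1 - M) * (1 - M) = 1 - M - (M - M * M) := by noncomm_ring
    rw [this, hMM, sub_self, sub_zero]
  -- main quadratic identity
  have hquad : (x - μ) ⬝ᵥ ((Q * Δ * Qᵀ)⁻¹ *ᵥ (x - μ)) =
      (μ - P) ⬝ᵥ ((zeroLastCols d Q * Δ⁻¹ * (zeroLastCols d Q)ᵀ) *ᵥ (μ - P)) +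
        b⁻¹ * ((x - P) ⬝ᵥ (x - P)) := by
    rw [hSinv, hSplit, Matrix.add_mulVec, dotProduct_add, smul_mulVec,
      dotProduct_smul, hT1, hT2, ← hydef, smul_eq_mul]
  -- log determinant
  have hd_le : d ≤ p := hdple
  have hlogdet : Real.log Δ.det =
      (∑ j : Fin d, Real.log (a j)) + (p - d : ℕ) * Real.log b := by
    rw [hΔ, det_diagonal, Real.log_prod (fun j _ => hδ0 j)]
    have h1 : ∑ j : Fin p, Real.log (δ j) =
        ∑ i ∈ Finset.range p, Real.log (if h : i < d then a ⟨i, h⟩ else b) :=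
      Fin.sum_univ_eq_sum_range (fun i => Real.log (if h : i < d then a ⟨i, h⟩ else b)) p
    rw [h1, ← Finset.sum_range_add_sum_Ico _ hd_le]
    congr 1
    · rw [← Fin.sum_univ_eq_sum_range (fun i => Real.log (if h : i < d then a ⟨i, h⟩ else b)) d]
      refine Finset.sum_congr rfl fun j _ => ?_
      simp [j.is_lt]
    · rw [Finset.sum_congr rfl (fun i hi => ?_), Finset.sum_const, Nat.card_Ico,
        nsmul_eq_mul]
      have : ¬ i < d := by
        simp only [Finset.mem_Ico] at hi
        omega
      simp [this]
  -- log of the density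
  have hpi : (0 : ℝ) < 2 * Real.pi := by positivity
  have hA : (0 : ℝ) < (2 * Real.pi) ^ (-(p : ℝ) / 2) := Real.rpow_pos_of_pos hpi _
  have hB : (0 : ℝ) < (Q * Δ * Qᵀ).det ^ (-(1 : ℝ) / 2) := by
    rw [hdet]; exact Real.rpow_pos_of_pos hdetpos _
  have hlog : Real.log (gaussPdf μ (Q * Δ * Qᵀ) x) =
      (-(p : ℝ) / 2) * Real.log (2 * Real.pi) + (-(1 : ℝ) / 2) * Real.log Δ.det +
        (-((x - μ) ⬝ᵥ ((Q * Δ * Qᵀ)⁻¹ *ᵥ (x - μ))) / 2) := by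
    rw [gaussPdf, Real.log_mul (by positivity) (Real.exp_ne_zero _), Real.log_mul hA.ne' hB.ne',
      Real.log_exp, Real.log_rpow hpi, hdet, Real.log_rpow hdetpos]
  rw [hlog, hquad, hlogdet]
  ring
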